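/- Let z ≥ 1 be an integer, let P be a nonempty finite multiset of points in ℝ^d, and let μ(P) be its centroid. Then for every point m ∈ ℝ^d, ∑_{p∈P} ‖p − μ(P)‖^z ≤ 2^z · ∑_{p∈P} ‖p − m‖^z. In particular, taking m to be an optimal center for (1,z)-clustering of P, the centroid μ(P) is a 2^z-approximate solution to the (1,z)-clustering problem on P. -/

import Mathlib

/-- **The centroid is a `2^z`-approximate `(1,z)`-center.** For every integer `z ≥ 1`,
every nonempty finite multiset `P` of points of `ℝ^d` with centroid
`μ(P) = (∑_{p∈P} p) / |P|`, and every point `m ∈ ℝ^d`,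
`∑_{p∈P} ‖p − μ(P)‖^z ≤ 2^z · ∑_{p∈P} ‖p − m‖^z`.  In particular (taking `m` to be an
optimal `(1,z)`-center), the centroid is a `2^z`-approximate solution to the
`(1,z)`-clustering problem on `P`. -/

lemma aux_centroid {d n : ℕ} (hn : 0 < n) (z : ℕ) (hz : 1 ≤ z)
    (q : Fin n → EuclideanSpace ℝ (Fin d)) (m : EuclideanSpace ℝ (Fin d)) :
    ∑ i, ‖q i - (n:ℝ)⁻¹ • ∑ j, q j‖ ^ z ≤ 2 ^ z * ∑ i, ‖q i - m‖ ^ z := by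
  set μ : EuclideanSpace ℝ (Fin d) := (n:ℝ)⁻¹ • ∑ j, q j with hμ
  set S : ℝ := ∑ i, ‖q i - m‖ ^ z with hS
  have hn' : (0:ℝ) < n := by exact_mod_cast hn
  -- step 3 : n * ‖m - μ‖^z ≤ S
  have hμm : μ - m = (n:ℝ)⁻¹ • ∑ j, (q j - m) := by
    rw [Finset.sum_sub_distrib, smul_sub, hμ, Finset.sum_const, Finset.card_univ,
      Fintype.card_fin, ← Nat.cast_smul_eq_nsmul ℝ, smul_smul, inv_mul_cancel₀ hn'.ne', one_smul]
  have h1 : ‖μ - m‖ ≤ (∑ j, ‖q j - m‖) / n := by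
    rw [hμm, norm_smul, div_eq_inv_mul]
    gcongr
    · simp [abs_of_nonneg, hn'.le]
    · exact norm_sum_le _ _
  have h2 : (n:ℝ) * ‖μ - m‖ ^ z ≤ S := by
    obtain ⟨k, rfl⟩ : ∃ k, z = k + 1 := ⟨z - 1, (Nat.succ_pred_eq_of_pos hz).symm⟩
    have h3 : ‖μ - m‖ ^ (k+1) ≤ ((∑ j, ‖q j - m‖) / n) ^ (k+1) := by
      gcongr
    have h4 : ((∑ j, ‖q j - m‖) / n) ^ (k+1) ≤ S / n := by
      rw [div_pow, hS]
      rw [div_le_div_iff₀ (by positivity) hn']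
      calc (∑ j, ‖q j - m‖) ^ (k+1) * n
          = ((∑ j, ‖q j - m‖) ^ (k+1) / (n:ℝ)^k) * n^(k+1) := by
            field_simp; ring
        _ ≤ (∑ j, ‖q j - m‖^(k+1)) * n^(k+1) := by
            gcongr
            have := pow_sum_div_card_le_sum_pow (s := Finset.univ)
              (f := fun j => ‖q j - m‖) (fun i _ => norm_nonneg _) k
            simpa using this
    rw [mul_comm, ← le_div_iff₀ hn']
    exact h3.trans h4
  have key : ∀ i, ‖q i - μ‖ ^ z ≤ 2 ^ (z-1) * (‖q i - m‖ ^ z + ‖m - μ‖ ^ z) := by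
    intro i
    calc ‖q i - μ‖ ^ z ≤ (‖q i - m‖ + ‖m - μ‖) ^ z :=
          pow_le_pow_left₀ (norm_nonneg _) (norm_sub_le_norm_sub_add_norm_sub _ _ _) z
      _ ≤ 2 ^ (z-1) * (‖q i - m‖ ^ z + ‖m - μ‖ ^ z) :=
          add_pow_le (norm_nonneg _) (norm_nonneg _) z
  calc ∑ i, ‖q i - μ‖ ^ z
      ≤ ∑ i, 2 ^ (z-1) * (‖q i - m‖ ^ z + ‖m - μ‖ ^ z) :=
        Finset.sum_le_sum fun i _ => key i
    _ = 2 ^ (z-1) * (S + n * ‖m - μ‖ ^ z) := by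
        rw [← Finset.mul_sum, Finset.sum_add_distrib, Finset.sum_const, Finset.card_univ,
          Fintype.card_fin, nsmul_eq_mul, hS]
    _ ≤ 2 ^ (z-1) * (S + S) := by
        gcongr
        rw [norm_sub_rev m μ]
        exact h2
    _ = 2 ^ z * S := by
        have : (2:ℝ) ^ z = 2 ^ (z-1) * 2 := by
          rw [← pow_succ, Nat.sub_add_cancel hz]
        rw [this]; ring

theorem centroid_is_two_pow_z_approx {d : ℕ} (z : ℕ) (hz : 1 ≤ z)
    (P : Multiset (EuclideanSpace ℝ (Fin d))) (hP : P ≠ 0)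
    (m : EuclideanSpace ℝ (Fin d)) :
    (P.map (fun p => ‖p - (P.card : ℝ)⁻¹ • P.sum‖ ^ z)).sum
      ≤ 2 ^ z * (P.map (fun p => ‖p - m‖ ^ z)).sum := by
  induction P using Quotient.inductionOn with
  | h l =>
    have hl : l ≠ [] := by simpa using hP
    have hn : 0 < l.length := List.length_pos_iff.mpr hl
    have h := aux_centroid (d := d) hn z hz l.get m
    have hrw : l = List.ofFn l.get := (List.ofFn_get l).symm
    simp only [Multiset.quot_mk_to_coe]
    rw [hrw]
    simp only [Multiset.map_coe, Multiset.sum_coe, Multiset.coe_card, List.map_ofFn,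
      List.sum_ofFn, List.length_ofFn, Function.comp]
    simpa using h
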